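/- The sum over elements h in H with HC_G(h) = G of 1/|h^G| equals (1/|H|) times the sum over h in H of |C_G(h) ∩ Hx|, where Hx is any generating coset of G/H. -/
import Mathlib


/-- The sum over elements `h ∈ H` with `H·C_G(h) = G` of `1/|h^G|` equals
`(1/|H|)` times the sum over `h ∈ H` of `|C_G(h) ∩ Hx|`, where `Hx` is any
generating coset of the cyclic quotient `G/H`. -/
theorem stmt1 {G : Type*} [Group G] [Finite G] (H : Subgroup G) [H.Normal]
    (hcyc : IsCyclic (G ⧸ H)) (x : G)
    (hgen : Subgroup.zpowers (QuotientGroup.mk x : G ⧸ H) = ⊤) :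
    (∑ᶠ h ∈ {h : G | h ∈ H ∧ H ⊔ Subgroup.centralizer {h} = ⊤},
        (1 : ℚ) / Nat.card (conjugatesOf h)) =
    (1 / Nat.card H) *
      ∑ᶠ h ∈ (H : Set G),
        (Nat.card {g : G | g ∈ Subgroup.centralizer {h} ∧
            (QuotientGroup.mk g : G ⧸ H) = QuotientGroup.mk x} : ℚ) := by
  classical
  have _inst : Fintype G := Fintype.ofFinite G
  set mkH : G →* G ⧸ H := QuotientGroup.mk' H with hmkH
  -- the equivalence between the sup condition and nonemptiness of the coset set
  have hiff : ∀ h : G, (H ⊔ Subgroup.centralizer {h} = ⊤) ↔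
      {g : G | g ∈ Subgroup.centralizer {h} ∧
        (QuotientGroup.mk g : G ⧸ H) = QuotientGroup.mk x}.Nonempty := by
    intro h
    set C := Subgroup.centralizer ({h} : Set G)
    constructor
    · intro hsup
      have hmapH : Subgroup.map mkH H = ⊥ := by
        exact le_bot_iff.mp fun y hy => by
          obtain ⟨g, hg, rfl⟩ := hy
          simpa [Subgroup.mem_bot, mkH] using (QuotientGroup.eq_one_iff g).mpr hg
      have hmapC : Subgroup.map mkH C = ⊤ := by
        have : Subgroup.map mkH (H ⊔ C) = ⊤ :=
          hsup ▸ Subgroup.map_top_of_surjective mkH (QuotientGroup.mk'_surjective H)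
        rwa [Subgroup.map_sup, hmapH, bot_sup_eq] at this
      have hx : (QuotientGroup.mk x : G ⧸ H) ∈ Subgroup.map mkH C := by
        rw [hmapC]; trivial
      obtain ⟨c, hcC, hcx⟩ := hx
      exact ⟨c, hcC, hcx⟩
    · rintro ⟨c, hcC, hcx⟩
      have hxmem : (QuotientGroup.mk x : G ⧸ H) ∈ Subgroup.map mkH C :=
        ⟨c, hcC, hcx⟩
      have hmapC : Subgroup.map mkH C = ⊤ := by
        rw [← top_le_iff, ← hgen]
        exact (Subgroup.zpowers_le).mpr hxmem
      have := Subgroup.comap_map_eq (f := mkH) C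
      rw [hmapC, QuotientGroup.ker_mk'] at this
      have : C ⊔ H = ⊤ := by
        rw [← this]
        simp
      rwa [sup_comm] at this
  -- key termwise identity
  have key : ∀ h : G, h ∈ H → H ⊔ Subgroup.centralizer {h} = ⊤ →
      (1 : ℚ) / Nat.card (conjugatesOf h) =
        (Nat.card {g : G | g ∈ Subgroup.centralizer {h} ∧
            (QuotientGroup.mk g : G ⧸ H) = QuotientGroup.mk x} : ℚ) / Nat.card H := by
    intro h hH hsup
    set C := Subgroup.centralizer ({h} : Set G) with hCdef
    obtain ⟨c, hcC, hcx⟩ := (hiff h).mp hsup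
    set S := {g : G | g ∈ C ∧ (QuotientGroup.mk g : G ⧸ H) = QuotientGroup.mk x} with hSdef
    -- |S| = |H ⊓ C|
    have hScard : Nat.card S = Nat.card (H ⊓ C : Subgroup G) := by
      refine Nat.card_congr ⟨fun g => ⟨c⁻¹ * g.1, ?_, ?_⟩,
        fun k => ⟨c * k.1, ?_, ?_⟩, ?_, ?_⟩
      · have : (QuotientGroup.mk (c⁻¹ * g.1) : G ⧸ H) = 1 := by
          have := g.2.2
          simp [QuotientGroup.mk_mul, QuotientGroup.mk_inv, hcx, this]
        exact (QuotientGroup.eq_one_iff _).mp this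
      · exact C.mul_mem (C.inv_mem hcC) g.2.1
      · exact C.mul_mem hcC k.2.2
      · simp [QuotientGroup.mk_mul, hcx, (QuotientGroup.eq_one_iff _).mpr k.2.1]
      · intro g; ext; simp
      · intro k; ext; simp
    -- |H ⊓ C| * [G : H] = |C|
    have h1 : Nat.card (H ⊓ C : Subgroup G) * H.index = Nat.card C := by
      have e1 : Nat.card (H.subgroupOf C) * (H.subgroupOf C).index = Nat.card C :=
        Subgroup.card_mul_index _
      have e2 : (H.subgroupOf C).index = H.index := by
        show H.relIndex C = H.index
        rw [← Subgroup.relIndex_sup_right, sup_comm, hsup, Subgroup.relIndex_top_right]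
      have e3 : Nat.card (H.subgroupOf C) = Nat.card (H ⊓ C : Subgroup G) := by
        rw [← Subgroup.inf_subgroupOf_right]
        exact Nat.card_congr (Subgroup.subgroupOfEquivOfLe inf_le_right).toEquiv
      rw [← e3, ← e2, e1]
    -- |H| * [G : H] = |G|
    have h2 : Nat.card H * H.index = Nat.card G := Subgroup.card_mul_index H
    -- orbit-stabilizer : |conj h| * |C| = |G|
    have h3 : Nat.card (conjugatesOf h) * Nat.card C = Nat.card G := by
      have horb : conjugatesOf h = MulAction.orbit (ConjAct G) h := by
        rw [ConjAct.orbit_eq_carrier_conjClasses]; rfl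
      have hstab : Nat.card C = Nat.card (MulAction.stabilizer (ConjAct G) h) :=
        Subgroup.nat_card_centralizer_nat_card_stabilizer h
      rw [horb, hstab]
      have := Fintype.ofFinite (MulAction.orbit (ConjAct G) h)
      simpa [Nat.card_eq_fintype_card] using
        MulAction.card_orbit_mul_card_stabilizer_eq_card_group (ConjAct G) h
    -- nonzeroness
    have hG0 : Nat.card G ≠ 0 := Nat.card_pos.ne'
    have hidx0 : H.index ≠ 0 := by
      intro h0; rw [h0, mul_zero] at h2; exact hG0 h2.symm
    have ha0 : Nat.card (conjugatesOf h) ≠ 0 := by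
      intro h0; rw [h0, zero_mul] at h3; exact hG0 h3.symm
    have hH0 : Nat.card H ≠ 0 := Nat.card_pos.ne'
    -- conclude : |H| = |conj h| * |S|
    have hnat : Nat.card H = Nat.card (conjugatesOf h) * Nat.card S := by
      have : (Nat.card (conjugatesOf h) * Nat.card S) * H.index = Nat.card H * H.index := by
        rw [hScard, mul_assoc, h1, h3, h2]
      exact (Nat.eq_of_mul_eq_mul_right (Nat.pos_of_ne_zero hidx0) this).symm
    have hS0 : Nat.card S ≠ 0 := by
      intro h0; rw [h0, mul_zero] at hnat; exact hH0 hnat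
    rw [div_eq_div_iff (by exact_mod_cast ha0) (by exact_mod_cast hH0), one_mul]
    exact_mod_cast hnat.trans (mul_comm _ _)
  -- empty case
  have hzero : ∀ h : G, ¬(H ⊔ Subgroup.centralizer {h} = ⊤) →
      Nat.card {g : G | g ∈ Subgroup.centralizer {h} ∧
          (QuotientGroup.mk g : G ⧸ H) = QuotientGroup.mk x} = 0 := by
    intro h hn
    have : {g : G | g ∈ Subgroup.centralizer {h} ∧
        (QuotientGroup.mk g : G ⧸ H) = QuotientGroup.mk x} = ∅ := by
      rw [← Set.not_nonempty_iff_eq_empty]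
      exact fun hne => hn ((hiff h).mpr hne)
    rw [this]
    simp
  -- assemble the sums
  set A : Finset G := Finset.univ.filter
    (fun h : G => h ∈ H ∧ H ⊔ Subgroup.centralizer {h} = ⊤) with hA
  set B : Finset G := Finset.univ.filter (fun h : G => h ∈ H) with hB
  have eA : {h : G | h ∈ H ∧ H ⊔ Subgroup.centralizer {h} = ⊤} = (A : Set G) := by
    ext h; simp [hA]
  have eB : (H : Set G) = (B : Set G) := by
    ext h; simp [hB]
  rw [eA, eB, finsum_mem_coe_finset, finsum_mem_coe_finset, Finset.mul_sum]
  have hsub : A ⊆ B := by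
    intro h hh
    simp only [hA, Finset.mem_filter] at hh
    simp [hB, hh.2.1]
  rw [← Finset.sum_subset hsub ?_]
  · refine Finset.sum_congr rfl fun h hh => ?_
    simp only [hA, Finset.mem_filter] at hh
    rw [key h hh.2.1 hh.2.2, div_eq_mul_inv, mul_comm, one_div]
  · intro h hhB hhA
    simp only [hB, Finset.mem_filter] at hhB
    simp only [hA, Finset.mem_filter] at hhA
    have : ¬(H ⊔ Subgroup.centralizer {h} = ⊤) := fun hc => hhA ⟨Finset.mem_univ h, hhB.2, hc⟩
    rw [hzero h this]
    simp
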